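/- Let L be a normal operator on L^2(μ) of the form L = ∑_x φ(x)(a_x − I) with each a_x unitary, φ(x) > 0 summable against the relevant Green function so that L is a Markov generator, and μ invariant under each a_x and a_x^{-1}. Then ⟨Lf, f⟩ = −(1/2) ∑_x φ(x) ∫ (a_x f − f)^2 dμ for real f, and hence Lf = 0 if and only if f is invariant under all a_x and a_x^{-1}. -/
import Mathlib


/- The Abelian sandpile model on ℤ^d.  Sites are `Fin d → ℤ`; the toppling matrix is
`Δ_{xx} = 2d`, `Δ_{xy} = -1` for nearest neighbours, `0` otherwise.  Toppling in volume `V`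
uses the matrix restricted to `V` (grains leaving `V` disappear).  `LegalSeq V η l η'`
says that `l` is a sequence of legal topplings in `V` taking `η` to `η'`. -/

open scoped Classical

abbrev Site (d : ℕ) := Fin d → ℤ

def adjacent {d : ℕ} (x y : Site d) : Prop := (∑ i, |x i - y i|) = 1

noncomputable def lap (d : ℕ) (x y : Site d) : ℤ :=
  if x = y then 2 * d else if adjacent x y then -1 else 0

abbrev Config (d : ℕ) := Site d → ℤ

noncomputable def lapV {d : ℕ} (V : Finset (Site d)) (x y : Site d) : ℤ :=
  if x ∈ V ∧ y ∈ V then lap d x y else 0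

noncomputable def topple {d : ℕ} (V : Finset (Site d)) (x : Site d) (η : Config d) :
    Config d := fun y => η y - lapV V x y

def Stable {d : ℕ} (V : Finset (Site d)) (η : Config d) : Prop := ∀ x ∈ V, η x ≤ 2 * d

/-- `l` is a sequence of legal topplings in volume `V` carrying `η` to `η'`. -/
def LegalSeq {d : ℕ} (V : Finset (Site d)) : Config d → List (Site d) → Config d → Prop
  | η, [], η' => η' = η
  | η, x :: l, η' => x ∈ V ∧ (2 * d : ℤ) < η x ∧ LegalSeq V (topple V x η) l η'

noncomputable def addGrain {d : ℕ} (x : Site d) (η : Config d) : Config d :=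
  fun y => if y = x then η y + 1 else η y


open MeasureTheory

/-- for the normal Markov generator `L = ∑_x φ(x)(a_x − I)` on `L²(μ)`, with
the `a_x` unitary (measure-preserving with measure-preserving inverses `b_x`) and `μ`
invariant, one has `⟨Lf, f⟩ = −(1/2) ∑_x φ(x) ∫ (a_x f − f)² dμ` for real `f`; hence
`Lf = 0` iff `f` is invariant under all `a_x` and `a_x⁻¹`. -/
theorem generator_dirichlet_form {d : ℕ}
    (μ : Measure (Config d)) [IsProbabilityMeasure μ]
    (a b : Site d → Config d → Config d)
    (hmeas : ∀ x : Site d, Measurable (a x) ∧ Measurable (b x))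
    (hmp : ∀ x : Site d, MeasurePreserving (a x) μ μ ∧ MeasurePreserving (b x) μ μ)
    (hinv : ∀ x : Site d, ∀ᵐ η ∂μ, b x (a x η) = η ∧ a x (b x η) = η)
    (φ : Site d → ℝ) (hφ : ∀ x, 0 < φ x)
    (f : Config d → ℝ) (hf : Measurable f) (hfb : ∃ C, ∀ η, |f η| ≤ C)
    (hsum : Summable fun x : Site d => φ x * ∫ η, (f (a x η) - f η) ^ 2 ∂μ) :
    (∑' x : Site d, φ x * ∫ η, (f (a x η) - f η) * f η ∂μ)
      = -(1 / 2) * ∑' x : Site d, φ x * ∫ η, (f (a x η) - f η) ^ 2 ∂μ ∧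
    ((∑' x : Site d, φ x * ∫ η, (f (a x η) - f η) ^ 2 ∂μ) = 0 ↔
      ∀ x : Site d,
        (fun η => f (a x η)) =ᵐ[μ] f ∧ (fun η => f (b x η)) =ᵐ[μ] f) := by
  obtain ⟨C, hC⟩ := hfb
  have hC0 : 0 ≤ C := le_trans (abs_nonneg _) (hC (fun _ => 0))
  -- integrability of bounded measurable functions
  have hib : ∀ (g : Config d → ℝ) (K : ℝ), Measurable g → (∀ η, |g η| ≤ K) →
      Integrable g μ := fun g K hg hK =>
    (integrable_const K).mono' hg.aestronglyMeasurable
      (Filter.Eventually.of_forall fun η => by simpa [Real.norm_eq_abs] using hK η)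
  have hma : ∀ x, Measurable fun η => f (a x η) := fun x => hf.comp (hmeas x).1
  have hmapint : ∀ (x : Site d) (g : Config d → ℝ), Measurable g →
      ∫ η, g (a x η) ∂μ = ∫ η, g η ∂μ := fun x g hg => by
    rw [← integral_map (hmeas x).1.aemeasurable hg.aestronglyMeasurable, (hmp x).1.map_eq]
  -- per-site key identity
  have key : ∀ x : Site d,
      ∫ η, (f (a x η) - f η) * f η ∂μ = -(1 / 2) * ∫ η, (f (a x η) - f η) ^ 2 ∂μ := by
    intro x
    set g : Config d → ℝ := fun η => f (a x η) with hg
    have hbg : ∀ η, |g η| ≤ C := fun η => hC _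
    have hprod : ∀ (u v : Config d → ℝ), (∀ η, |u η| ≤ C) → (∀ η, |v η| ≤ C) →
        ∀ η, |u η * v η| ≤ C * C := fun u v hu hv η => by
      rw [abs_mul]
      exact mul_le_mul (hu η) (hv η) (abs_nonneg _) hC0
    have igg : Integrable (fun η => g η * g η) μ :=
      hib _ (C * C) ((hma x).mul (hma x)) (hprod g g hbg hbg)
    have igf : Integrable (fun η => g η * f η) μ :=
      hib _ (C * C) ((hma x).mul hf) (hprod g f hbg hC)
    have iff' : Integrable (fun η => f η * f η) μ :=
      hib _ (C * C) (hf.mul hf) (hprod f f hC hC)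
    have e1 : ∫ η, (g η - f η) * f η ∂μ
        = ∫ η, g η * f η ∂μ - ∫ η, f η * f η ∂μ := by
      rw [← integral_sub igf iff']
      congr 1; funext η; ring
    have e2 : ∫ η, (g η - f η) ^ 2 ∂μ
        = ∫ η, g η * g η ∂μ - 2 * ∫ η, g η * f η ∂μ + ∫ η, f η * f η ∂μ := by
      have hi1 : Integrable (fun η => g η * g η - 2 * (g η * f η)) μ := by
        exact igg.sub (igf.const_mul 2)
      have : ∀ η, (g η - f η) ^ 2 = g η * g η - 2 * (g η * f η) + f η * f η :=
        fun η => by ring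
      simp only [this]
      rw [integral_add hi1 iff', integral_sub igg (igf.const_mul 2), integral_const_mul]
    have e3 : ∫ η, g η * g η ∂μ = ∫ η, f η * f η ∂μ :=
      hmapint x (fun η => f η * f η) (hf.mul hf)
    rw [e1, e2, e3]; ring
  constructor
  · calc (∑' x : Site d, φ x * ∫ η, (f (a x η) - f η) * f η ∂μ)
        = ∑' x : Site d, -(1 / 2) * (φ x * ∫ η, (f (a x η) - f η) ^ 2 ∂μ) :=
          tsum_congr fun x => by rw [key x]; ring
      _ = -(1 / 2) * ∑' x : Site d, φ x * ∫ η, (f (a x η) - f η) ^ 2 ∂μ := tsum_mul_left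
  · have hnn : ∀ x : Site d, 0 ≤ φ x * ∫ η, (f (a x η) - f η) ^ 2 ∂μ := fun x =>
      mul_nonneg (hφ x).le (integral_nonneg fun η => sq_nonneg _)
    constructor
    · intro h0 x
      have hterm : φ x * ∫ η, (f (a x η) - f η) ^ 2 ∂μ = 0 :=
        le_antisymm (h0 ▸ Summable.le_tsum hsum x fun y _ => hnn y) (hnn x)
      have hint0 : ∫ η, (f (a x η) - f η) ^ 2 ∂μ = 0 := by
        rcases mul_eq_zero.1 hterm with h | h
        · exact absurd h (hφ x).ne'
        · exact h
      have hsqint : Integrable (fun η => (f (a x η) - f η) ^ 2) μ := by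
        have hbnd : ∀ η, |(f (a x η) - f η) ^ 2| ≤ (2 * C) ^ 2 := fun η => by
          rw [abs_of_nonneg (sq_nonneg _)]
          have h1 : |f (a x η) - f η| ≤ 2 * C := by
            calc |f (a x η) - f η| ≤ |f (a x η)| + |f η| := abs_sub _ _
              _ ≤ C + C := add_le_add (hC _) (hC _)
              _ = 2 * C := by ring
          calc (f (a x η) - f η) ^ 2 = |f (a x η) - f η| ^ 2 := (sq_abs _).symm
            _ ≤ (2 * C) ^ 2 := pow_le_pow_left₀ (abs_nonneg _) h1 2
        exact hib _ ((2 * C) ^ 2) (((hma x).sub hf).pow_const 2) hbnd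
      have hae : (fun η => (f (a x η) - f η) ^ 2) =ᵐ[μ] 0 :=
        (integral_eq_zero_iff_of_nonneg (fun η => sq_nonneg _) hsqint).1 hint0
      have haeq : ∀ᵐ η ∂μ, f (a x η) = f η := by
        filter_upwards [hae] with η hη
        have := pow_eq_zero_iff (n := 2) (by norm_num) |>.1 hη
        linarith [sub_eq_zero.1 this]
      refine ⟨haeq, ?_⟩
      -- pull back by b x
      have haeb : ∀ᵐ η ∂μ, f (a x (b x η)) = f (b x η) := by
        have := (hmp x).2.quasiMeasurePreserving.ae haeq
        exact this
      filter_upwards [haeb, hinv x] with η h1 h2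
      rw [← h1, h2.2]
    · intro hall
      have : ∀ x : Site d, φ x * ∫ η, (f (a x η) - f η) ^ 2 ∂μ = 0 := by
        intro x
        have h0 : ∫ η, (f (a x η) - f η) ^ 2 ∂μ = 0 := by
          have : (fun η => (f (a x η) - f η) ^ 2) =ᵐ[μ] fun _ => (0 : ℝ) := by
            filter_upwards [(hall x).1] with η hη
            simp [hη]
          rw [integral_congr_ae this, integral_zero]
        rw [h0, mul_zero]
      calc (∑' x : Site d, φ x * ∫ η, (f (a x η) - f η) ^ 2 ∂μ)
          = ∑' _ : Site d, (0 : ℝ) := tsum_congr this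
        _ = 0 := tsum_zero
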